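/- Let r, k, c, m > 0. The set of solutions (x, y) with x ≥ 0 and y ≥ 0 of the equilibrium equations rx/(1+ky) − cxy = 0 and cxy² − my = 0 consists of exactly two points: the origin (0, 0) and the positive point (x₁, y₁) with x₁ = 2km/(−c + √(c² + 4crk)) and y₁ = (−c + √(c² + 4crk))/(2ck); moreover x₁ > 0 and y₁ > 0. -/

import Mathlib

/-- The set of nonnegative equilibria of the microbial pesticide model with
inhibiting effect `dx/dt = rx/(1+ky) - cxy`, `dy/dt = cxy² - my` consists of
exactly the origin and the positive point `(x₁, y₁)`; moreover `x₁, y₁ > 0`. -/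
theorem stmt0 (r k c m : ℝ) (hr : 0 < r) (hk : 0 < k) (hc : 0 < c) (hm : 0 < m)
    (x₁ y₁ : ℝ)
    (hx₁ : x₁ = 2 * k * m / (-c + Real.sqrt (c ^ 2 + 4 * c * r * k)))
    (hy₁ : y₁ = (-c + Real.sqrt (c ^ 2 + 4 * c * r * k)) / (2 * c * k)) :
    {p : ℝ × ℝ | 0 ≤ p.1 ∧ 0 ≤ p.2 ∧
        r * p.1 / (1 + k * p.2) - c * p.1 * p.2 = 0 ∧
        c * p.1 * p.2 ^ 2 - m * p.2 = 0} = {(0, 0), (x₁, y₁)} ∧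
      0 < x₁ ∧ 0 < y₁ := by
  set s := Real.sqrt (c ^ 2 + 4 * c * r * k) with hs
  have hs2 : s ^ 2 = c ^ 2 + 4 * c * r * k := Real.sq_sqrt (by positivity)
  have hs0 : 0 ≤ s := Real.sqrt_nonneg _
  have hcrk : 0 < c * r * k := by positivity
  have hcs : c < s := by nlinarith [hs2, hs0, hc.le, hcrk]
  have hden : 0 < -c + s := by linarith
  have hy1pos : 0 < y₁ := by rw [hy₁]; positivity
  have hx1pos : 0 < x₁ := by rw [hx₁]; positivity
  -- key algebraic facts about (x₁, y₁)
  have hquad : c * k * y₁ ^ 2 + c * y₁ - r = 0 := by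
    rw [hy₁]; field_simp; nlinarith [hs2]
  have hxy : c * x₁ * y₁ = m := by
    rw [hx₁, hy₁]; field_simp
  refine ⟨?_, hx1pos, hy1pos⟩
  ext ⟨x, y⟩
  simp only [Set.mem_setOf_eq, Set.mem_insert_iff, Set.mem_singleton_iff, Prod.mk.injEq]
  constructor
  · rintro ⟨hx0, hy0, h1, h2⟩
    have hkd : (0:ℝ) < 1 + k * y := by positivity
    rcases eq_or_lt_of_le hx0 with hx | hx
    · left
      obtain rfl := hx.symm
      have hmy : m * y = 0 := by linarith [h2]
      rcases mul_eq_zero.mp hmy with h | h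
      · exact absurd h (ne_of_gt hm)
      · exact ⟨rfl, h⟩
    · right
      have h1' : r * x - c * x * y * (1 + k * y) = 0 := by
        have h := sub_eq_zero.mp h1
        field_simp at h
        linear_combination x * h
      have hq : c * k * y ^ 2 + c * y - r = 0 := by
        have hx' : x ≠ 0 := ne_of_gt hx
        have hfx : x * (c * k * y ^ 2 + c * y - r) = 0 := by linear_combination -h1'
        rcases mul_eq_zero.mp hfx with h | h
        · exact absurd h hx'
        · exact h
      have hyy : y = y₁ := by
        have hfac : (y - y₁) * (c * k * (y + y₁) + c) = 0 := by
          linear_combination hq - hquad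
        have hpos : 0 < c * k * (y + y₁) + c := by positivity
        rcases mul_eq_zero.mp hfac with h | h
        · linarith
        · linarith
      rw [hyy] at h2
      have hxx : x = x₁ := by
        have hcx : c * x * y₁ = m := by
          have hf : y₁ * (c * x * y₁ - m) = 0 := by linear_combination h2
          rcases mul_eq_zero.mp hf with h | h
          · exact absurd h (ne_of_gt hy1pos)
          · linarith
        have h3 : c * y₁ * (x - x₁) = 0 := by linear_combination hcx - hxy
        have hcy : 0 < c * y₁ := by positivity
        rcases mul_eq_zero.mp h3 with h | h
        · exact absurd h (ne_of_gt hcy)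
        · linarith
      exact ⟨hxx, hyy⟩
  · rintro (⟨hx, hy⟩ | ⟨hx, hy⟩) <;> rw [hx, hy]
    · norm_num
    · refine ⟨le_of_lt hx1pos, le_of_lt hy1pos, ?_, ?_⟩
      · have hkd : (1 + k * y₁) ≠ 0 := by positivity
        rw [sub_eq_zero, div_eq_iff hkd]
        linear_combination (-x₁) * hquad
      · linear_combination y₁ * hxy
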